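/- Let 1 ≤ j ≤ L−2, let r > 0, and let x ≤ y be reals with x ∈ I_j, y ∈ I_j ∪ I_{j+1}, and y − x ≤ 2r. Then ∫_x^y f(t) dt ≤ (32 r L / δ) · Σ_{i=j+2}^{L} a_i, where a_i = ∫_{I_i} f(t) dt (so that Σ_{i=j+2}^{L} a_i = 2^{−(j+1)}). -/

import Mathlib

open MeasureTheory

/-- The density `f` of the distribution `dist(δ, k)` where `k = 2^L`. -/
noncomputable def distDensity (δ : ℝ) (L : ℕ) (x : ℝ) : ℝ :=
  if x < δ/8 ∨ δ/4 < x then 0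
  else if δ/4 - δ/(8*(L:ℝ)) ≤ x then (8*(L:ℝ)/δ) * (2 / 2^L)
  else (8*(L:ℝ)/δ) * (1/2 : ℝ) ^ ((⌊(x - δ/8) / (δ/(8*(L:ℝ)))⌋).toNat + 1)

/-- The `j`-th subinterval `I_j` of `[δ/8, δ/4]`, for `1 ≤ j ≤ L`. -/
noncomputable def intervalI (δ : ℝ) (L : ℕ) (j : ℕ) : Set ℝ :=
  if j = L then Set.Icc (δ/4 - δ/(8*(L:ℝ))) (δ/4)
  else Set.Ico (δ/8 + ((j:ℝ)-1)*(δ/(8*(L:ℝ)))) (δ/8 + (j:ℝ)*(δ/(8*(L:ℝ))))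

/-- Let `1 ≤ j ≤ L-2`, let `r > 0`, and let `x ≤ y` be reals with `x ∈ I_j`,
`y ∈ I_j ∪ I_{j+1}` and `y - x ≤ 2r`. Then
`∫_x^y f(t) dt ≤ (32 r L / δ) · Σ_{i=j+2}^{L} a_i`, where
`a_i = ∫_{I_i} f(t) dt` (so that `Σ_{i=j+2}^{L} a_i = 2^{-(j+1)}`). -/
lemma measurable_distDensity (δ : ℝ) (L : ℕ) : Measurable (distDensity δ L) := by
  unfold distDensity
  refine Measurable.ite ?_ measurable_const (Measurable.ite ?_ measurable_const ?_)
  · simp only [Set.setOf_or]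
    exact (measurableSet_Iio).union (measurableSet_Ioi)
  · exact measurableSet_Ici
  · have m0 : Measurable fun x : ℝ => ⌊(x - δ/8)/(δ/(8*(L:ℝ)))⌋ :=
      Int.measurable_floor.comp ((measurable_id.sub_const _).div_const _)
    have m1 : Measurable fun x : ℝ => (⌊(x - δ/8)/(δ/(8*(L:ℝ)))⌋).toNat :=
      (measurable_from_top (f := Int.toNat)).comp m0
    exact measurable_const.mul ((measurable_from_top (f := fun n : ℕ => ((1:ℝ)/2)^(n+1))).comp m1)

lemma distDensity_eq_mid (δ : ℝ) (hδ : 0 < δ) (L : ℕ) (i : ℕ) (hi1 : 1 ≤ i) (hi2 : i < L)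
    (t : ℝ) (ht : t ∈ Set.Ico (δ/8 + ((i:ℝ)-1)*(δ/(8*(L:ℝ)))) (δ/8 + (i:ℝ)*(δ/(8*(L:ℝ))))) :
    distDensity δ L t = (8*(L:ℝ)/δ) * (1/2 : ℝ)^i := by
  have hL0 : (0:ℝ) < L := by exact_mod_cast (by omega : 0 < L)
  have hh : 0 < δ/(8*(L:ℝ)) := by positivity
  have hi1' : (1:ℝ) ≤ i := by exact_mod_cast hi1
  have hi2' : (i:ℝ) + 1 ≤ L := by exact_mod_cast hi2
  have hLh : (L:ℝ) * (δ/(8*(L:ℝ))) = δ/8 := by field_simp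
  have ht1 := ht.1
  have ht2 := ht.2
  have hnn : 0 ≤ ((i:ℝ)-1) * (δ/(8*(L:ℝ))) := mul_nonneg (by linarith) hh.le
  have hub : t < δ/4 - δ/(8*(L:ℝ)) := by
    have : (i:ℝ) * (δ/(8*(L:ℝ))) ≤ ((L:ℝ)-1) * (δ/(8*(L:ℝ))) :=
      mul_le_mul_of_nonneg_right (by linarith) hh.le
    nlinarith [hLh]
  have hfl : ⌊(t - δ/8) / (δ/(8*(L:ℝ)))⌋ = (i:ℤ) - 1 := by
    rw [Int.floor_eq_iff]
    constructor
    · rw [le_div_iff₀ hh]; push_cast; linarith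
    · rw [div_lt_iff₀ hh]; push_cast; linarith
  have hc1 : ¬(t < δ/8 ∨ δ/4 < t) := by push_neg; exact ⟨by linarith, by linarith⟩
  have hexp : ((i:ℤ) - 1).toNat + 1 = i := by omega
  unfold distDensity
  rw [if_neg hc1, if_neg (by linarith), hfl, hexp]


lemma distDensity_eq_top (δ : ℝ) (hδ : 0 < δ) (L : ℕ) (hL1 : 1 ≤ L)
    (t : ℝ) (ht : t ∈ Set.Icc (δ/4 - δ/(8*(L:ℝ))) (δ/4)) :
    distDensity δ L t = (8*(L:ℝ)/δ) * (2 / 2^L) := by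
  have hL0 : (0:ℝ) < L := by exact_mod_cast hL1
  have hL1' : (1:ℝ) ≤ L := by exact_mod_cast hL1
  have hsmall : δ/(8*(L:ℝ)) ≤ δ/8 := by
    rw [div_le_div_iff₀ (by positivity) (by norm_num)]
    nlinarith
  have hc1 : ¬(t < δ/8 ∨ δ/4 < t) := by
    push_neg
    exact ⟨by linarith [ht.1], ht.2⟩
  unfold distDensity
  rw [if_neg hc1, if_pos ht.1]

lemma integral_I (δ : ℝ) (hδ : 0 < δ) (L : ℕ) (hL1 : 1 ≤ L) (i : ℕ) (hi1 : 1 ≤ i) (hi2 : i ≤ L) :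
    ∫ t in intervalI δ L i, distDensity δ L t
      = if i = L then 2*(1/2:ℝ)^L else (1/2:ℝ)^i := by
  have hL0 : (0:ℝ) < L := by exact_mod_cast hL1
  have hh : 0 < δ/(8*(L:ℝ)) := by positivity
  have hone : δ/(8*(L:ℝ)) * (8*(L:ℝ)/δ) = 1 := by field_simp
  by_cases hiL : i = L
  · rw [if_pos hiL]
    unfold intervalI
    rw [if_pos hiL]
    rw [setIntegral_congr_fun measurableSet_Icc
        (fun t ht => distDensity_eq_top δ hδ L hL1 t ht)]
    rw [setIntegral_const, measureReal_def, Real.volume_Icc,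
        ENNReal.toReal_ofReal (by linarith : (0:ℝ) ≤ δ/4 - (δ/4 - δ/(8*(L:ℝ))))]
    have : δ/4 - (δ/4 - δ/(8*(L:ℝ))) = δ/(8*(L:ℝ)) := by ring
    rw [this, smul_eq_mul]
    calc δ/(8*(L:ℝ)) * (8*(L:ℝ)/δ * (2 / 2^L))
        = (δ/(8*(L:ℝ)) * (8*(L:ℝ)/δ)) * (2/2^L) := by ring
      _ = 2*(1/2:ℝ)^L := by rw [hone]; rw [one_mul, one_div, inv_pow]; ring
  · rw [if_neg hiL]
    unfold intervalI
    rw [if_neg hiL]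
    rw [setIntegral_congr_fun measurableSet_Ico
        (fun t ht => distDensity_eq_mid δ hδ L i hi1 (by omega) t ht)]
    rw [setIntegral_const, measureReal_def, Real.volume_Ico]
    have he : δ/8 + (i:ℝ)*(δ/(8*(L:ℝ))) - (δ/8 + ((i:ℝ)-1)*(δ/(8*(L:ℝ)))) = δ/(8*(L:ℝ)) := by ring
    rw [he, ENNReal.toReal_ofReal hh.le, smul_eq_mul]
    calc δ/(8*(L:ℝ)) * (8*(L:ℝ)/δ * (1/2:ℝ)^i)
        = (δ/(8*(L:ℝ)) * (8*(L:ℝ)/δ)) * (1/2:ℝ)^i := by ring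
      _ = (1/2:ℝ)^i := by rw [hone, one_mul]


lemma sum_aux (L : ℕ) : ∀ k m : ℕ, m + k = L → 1 ≤ m →
    (∑ i ∈ Finset.Icc m L, (if i = L then 2*(1/2:ℝ)^L else (1/2:ℝ)^i)) = (1/2:ℝ)^(m-1) := by
  have key : ∀ m : ℕ, 1 ≤ m → ((1:ℝ)/2)^(m-1) = 2*(1/2:ℝ)^m := by
    intro m hm
    obtain ⟨n, rfl⟩ : ∃ n, m = n+1 := ⟨m-1, by omega⟩
    simp [pow_succ]
    ring
  intro k
  induction k with
  | zero =>
    intro m hm hm1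
    have : m = L := by omega
    subst this
    rw [Finset.Icc_self, Finset.sum_singleton, if_pos rfl, key m hm1]
  | succ k ih =>
    intro m hm hm1
    have hmL : m < L := by omega
    have hins : Finset.Icc m L = insert m (Finset.Icc (m+1) L) := by
      ext a; simp [Finset.mem_Icc, Finset.mem_insert]; omega
    rw [hins, Finset.sum_insert (by simp)]
    rw [ih (m+1) (by omega) (by omega)]
    rw [if_neg (by omega)]
    have h1 : m + 1 - 1 = m := by omega
    rw [h1, key m hm1]
    ring

lemma distDensity_nonneg (δ : ℝ) (hδ : 0 < δ) (L : ℕ) (t : ℝ) : 0 ≤ distDensity δ L t := by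
  unfold distDensity
  split_ifs <;> positivity


theorem integral_between_le (δ : ℝ) (hδ : 0 < δ) (L : ℕ) (hL : 2 ≤ L)
    (j : ℕ) (hj1 : 1 ≤ j) (hj2 : j ≤ L - 2) (r : ℝ) (hr : 0 < r)
    (x y : ℝ) (hxy : x ≤ y) (hx : x ∈ intervalI δ L j)
    (hy : y ∈ intervalI δ L j ∪ intervalI δ L (j+1)) (hyx : y - x ≤ 2*r) :
    ((∑ i ∈ Finset.Icc (j+2) L, ∫ t in intervalI δ L i, distDensity δ L t)
        = (1/2 : ℝ)^(j+1)) ∧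
    (∫ t in x..y, distDensity δ L t)
        ≤ (32*r*(L:ℝ)/δ) *
            ∑ i ∈ Finset.Icc (j+2) L, ∫ t in intervalI δ L i, distDensity δ L t := by
  have hL0 : (0:ℝ) < L := by exact_mod_cast (by omega : 0 < L)
  have hh : 0 < δ/(8*(L:ℝ)) := by positivity
  have hjL : j ≤ L - 2 := hj2
  -- Part 1
  have hsum : (∑ i ∈ Finset.Icc (j+2) L, ∫ t in intervalI δ L i, distDensity δ L t)
      = (1/2 : ℝ)^(j+1) := by
    have hcongr : ∀ i ∈ Finset.Icc (j+2) L,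
        (∫ t in intervalI δ L i, distDensity δ L t)
          = if i = L then 2*(1/2:ℝ)^L else (1/2:ℝ)^i := by
      intro i hi
      rw [Finset.mem_Icc] at hi
      exact integral_I δ hδ L (by omega) i (by omega) hi.2
    rw [Finset.sum_congr rfl hcongr, sum_aux L (L - (j+2)) (j+2) (by omega) (by omega)]
    norm_num
  refine ⟨hsum, ?_⟩
  rw [hsum]
  -- Part 2
  have hjL' : j ≠ L := by omega
  have hj1L : j + 1 ≠ L := by omega
  rw [intervalI, if_neg hjL'] at hx
  rw [intervalI, if_neg hjL', intervalI, if_neg hj1L] at hy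
  have hj1R : ((j:ℝ)+1) ≤ (L:ℝ) - 1 := by
    have : j + 2 ≤ L := by omega
    have : (j:ℝ) + 2 ≤ L := by exact_mod_cast this
    linarith
  have hLh : (L:ℝ) * (δ/(8*(L:ℝ))) = δ/8 := by field_simp
  have hjR : (1:ℝ) ≤ (j:ℝ) := by exact_mod_cast hj1
  have hylt : y < δ/8 + ((j:ℝ)+1)*(δ/(8*(L:ℝ))) := by
    rcases hy with hy | hy
    · have := hy.2
      nlinarith [hh]
    · have := hy.2
      push_cast at this
      linarith
  have hyub : y < δ/4 - δ/(8*(L:ℝ)) := by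
    have h2 : ((j:ℝ)+1)*(δ/(8*(L:ℝ))) ≤ ((L:ℝ)-1)*(δ/(8*(L:ℝ))) :=
      mul_le_mul_of_nonneg_right hj1R hh.le
    nlinarith [hLh]
  have hxlb : δ/8 ≤ x := by
    have := hx.1
    nlinarith [hh]
  set C : ℝ := (8*(L:ℝ)/δ) * (1/2:ℝ)^j with hC
  have hCnn : 0 ≤ C := by positivity
  have hbound : ∀ t ∈ Set.Icc x y, distDensity δ L t ≤ C := by
    intro t ht
    have ht1 : δ/8 ≤ t := le_trans hxlb ht.1
    have ht2 : t < δ/4 - δ/(8*(L:ℝ)) := lt_of_le_of_lt ht.2 hyub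
    have hc1 : ¬(t < δ/8 ∨ δ/4 < t) := by push_neg; exact ⟨ht1, by linarith⟩
    have hfl : ((j:ℤ) - 1) ≤ ⌊(t - δ/8) / (δ/(8*(L:ℝ)))⌋ := by
      rw [Int.le_floor]
      rw [le_div_iff₀ hh]
      push_cast
      have := hx.1
      nlinarith [ht.1]
    have hexp : j ≤ (⌊(t - δ/8) / (δ/(8*(L:ℝ)))⌋).toNat + 1 := by omega
    unfold distDensity
    rw [if_neg hc1, if_neg (by linarith)]
    exact mul_le_mul_of_nonneg_left
      (pow_le_pow_of_le_one (by norm_num) (by norm_num) hexp) (by positivity)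
  have hInt : IntegrableOn (distDensity δ L) (Set.Icc x y) volume := by
    apply Measure.integrableOn_of_bounded (M := C)
    · exact (measure_Icc_lt_top).ne
    · exact (measurable_distDensity δ L).aestronglyMeasurable
    · refine (ae_restrict_iff' measurableSet_Icc).2 (Filter.Eventually.of_forall fun t ht => ?_)
      rw [Real.norm_eq_abs, abs_of_nonneg (distDensity_nonneg δ hδ L t)]
      exact hbound t ht
  have hII : IntervalIntegrable (distDensity δ L) volume x y := by
    apply IntegrableOn.intervalIntegrable
    rwa [Set.uIcc_of_le hxy]
  have hmono := intervalIntegral.integral_mono_on hxy hII (intervalIntegrable_const (c := C)) hbound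
  rw [intervalIntegral.integral_const, smul_eq_mul] at hmono
  have h2 : (y - x) * C ≤ 2*r*C := mul_le_mul_of_nonneg_right hyx hCnn
  have hRHS : (32*r*(L:ℝ)/δ) * (1/2:ℝ)^(j+1) = 2*r*C := by
    rw [hC, pow_succ]
    ring
  rw [hRHS]
  linarith
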